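/- Every cycle of even length has a star edge coloring with 3 colors. -/

import Mathlib

open SimpleGraph

/-- A star edge coloring: a proper edge coloring with no 2-colored path or cycle
on four edges. For proper colorings, this is equivalent to requiring that every
walk of length 4 with pairwise distinct edges sees at least 3 colors. -/
def IsStarEdgeColoring {V β : Type*} [DecidableEq β] (G : SimpleGraph V)
    (c : Sym2 V → β) : Prop :=
  (∀ ⦃e₁⦄, e₁ ∈ G.edgeSet → ∀ ⦃e₂⦄, e₂ ∈ G.edgeSet → e₁ ≠ e₂ →
      (∃ v, v ∈ e₁ ∧ v ∈ e₂) → c e₁ ≠ c e₂) ∧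
  ∀ (u v : V) (p : G.Walk u v), p.length = 4 → p.edges.Nodup →
    3 ≤ (p.edges.map c).toFinset.card

/-- The star chromatic index: the least `n` such that `G` has a star edge
coloring with colors in `Fin n`. -/
noncomputable def starChromaticIndex {V : Type*} (G : SimpleGraph V) : ℕ :=
  sInf {n | ∃ c : Sym2 V → Fin n, IsStarEdgeColoring G c}

namespace StarAux

/-- basic periodic pattern 0,1,0,2 -/
def pat (k : ℕ) : Fin 3 :=
  match k % 4 with
  | 0 => 0
  | 1 => 1
  | 2 => 0
  | _ => 2

lemma pat_mod (k : ℕ) : pat k = pat (k % 4) := by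
  unfold pat; rw [Nat.mod_mod_of_dvd _ dvd_rfl]

lemma pat_adj (i : ℕ) : pat i ≠ pat (i + 1) := by
  rw [pat_mod i, pat_mod (i+1), show (i+1) % 4 = (i % 4 + 1) % 4 by omega]
  have h : i % 4 = 0 ∨ i % 4 = 1 ∨ i % 4 = 2 ∨ i % 4 = 3 := by omega
  rcases h with h|h|h|h <;> rw [h] <;> decide

lemma pat_window (i : ℕ) :
    3 ≤ ({pat i, pat (i+1), pat (i+2), pat (i+3)} : Finset (Fin 3)).card := by
  rw [pat_mod i, pat_mod (i+1), pat_mod (i+2), pat_mod (i+3),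
    show (i+1) % 4 = (i % 4 + 1) % 4 by omega, show (i+2) % 4 = (i % 4 + 2) % 4 by omega,
    show (i+3) % 4 = (i % 4 + 3) % 4 by omega]
  have h : i % 4 = 0 ∨ i % 4 = 1 ∨ i % 4 = 2 ∨ i % 4 = 3 := by omega
  rcases h with h|h|h|h <;> rw [h] <;> decide

/-- The coloring function on positions, `n` the cycle length. -/
def F (n i : ℕ) : Fin 3 :=
  if n % 4 ≠ 0 ∧ i % n = n - 2 then 1
  else if n % 4 ≠ 0 ∧ i % n = n - 1 then 2
  else pat (i % n)

lemma F_mod (n i : ℕ) : F n (i % n) = F n i := by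
  unfold F; rw [Nat.mod_mod_of_dvd _ dvd_rfl]

lemma F_shift (n i k : ℕ) : F n (i + k) = F n (i % n + k) := by
  unfold F
  have : (i + k) % n = (i % n + k) % n := by
    conv_lhs => rw [Nat.add_mod]
    conv_rhs => rw [Nat.add_mod, Nat.mod_mod_of_dvd i dvd_rfl]
  rw [this]

lemma F_eq_pat_of_dvd (n j : ℕ) (h4 : n % 4 = 0) : F n j = pat j := by
  unfold F
  simp only [h4, ne_eq, not_true_eq_false, false_and, if_false]
  rw [pat_mod (j % n), Nat.mod_mod_of_dvd j (by omega : 4 ∣ n), ← pat_mod]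

lemma F_eq_pat (n j : ℕ) (h1 : j < n) (h2 : j ≠ n - 2) (h3 : j ≠ n - 1) :
    F n j = pat j := by
  unfold F
  rw [Nat.mod_eq_of_lt h1]
  simp [h2, h3]

lemma F_special1 (n j : ℕ) (h4 : n % 4 ≠ 0) (h : j % n = n - 2) (hn : 3 ≤ n) :
    F n j = 1 := by
  unfold F; simp [h4, h]

lemma F_special2 (n j : ℕ) (h4 : n % 4 ≠ 0) (h : j % n = n - 1) (hn : 3 ≤ n) :
    F n j = 2 := by
  unfold F; rw [h]
  simp [h4, show n - 1 ≠ n - 2 by omega]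

/-- adjacent positions get different colors -/
lemma F_adj (n i : ℕ) (hn : 3 ≤ n) (he : n % 2 = 0) : F n i ≠ F n (i + 1) := by
  have h4 : n % 4 = 0 ∨ n % 4 = 2 := by omega
  rcases h4 with h4 | h4
  · rw [F_eq_pat_of_dvd n i h4, F_eq_pat_of_dvd n (i+1) h4]; exact pat_adj i
  · have hn6 : 6 ≤ n := by omega
    rw [← F_mod n i, F_shift n i 1]
    have hr : i % n < n := Nat.mod_lt _ (by omega)
    set r := i % n with hrdef
    clear_value r
    have hc : r ≤ n - 4 ∨ r = n - 3 ∨ r = n - 2 ∨ r = n - 1 := by omega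
    rcases hc with hc | hc | hc | hc
    · rw [F_eq_pat n r (by omega) (by omega) (by omega),
        F_eq_pat n (r+1) (by omega) (by omega) (by omega)]
      exact pat_adj r
    · subst hc
      rw [F_eq_pat n (n-3) (by omega) (by omega) (by omega),
        F_special1 n (n-3+1) (by omega) (by rw [Nat.mod_eq_of_lt (by omega)]; omega) hn,
        pat_mod, show (n-3) % 4 = 3 by omega]
      decide
    · subst hc
      rw [F_special1 n (n-2) (by omega) (by rw [Nat.mod_eq_of_lt (by omega)]) hn,
        F_special2 n (n-2+1) (by omega) (by rw [show n-2+1 = n-1 by omega, Nat.mod_eq_of_lt (by omega)]) hn]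
      decide
    · subst hc
      rw [F_special2 n (n-1) (by omega) (by rw [Nat.mod_eq_of_lt (by omega)]) hn,
        show n-1+1 = n by omega,
        show F n n = pat 0 by
          unfold F; rw [Nat.mod_self]; simp [show (0:ℕ) ≠ n - 2 by omega, show (0:ℕ) ≠ n - 1 by omega]]
      decide

/-- any window of four consecutive positions sees at least 3 colors -/
lemma F_window (n i : ℕ) (hn : 3 ≤ n) (he : n % 2 = 0) :
    3 ≤ ({F n i, F n (i+1), F n (i+2), F n (i+3)} : Finset (Fin 3)).card := by
  have h4 : n % 4 = 0 ∨ n % 4 = 2 := by omega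
  rcases h4 with h4 | h4
  · rw [F_eq_pat_of_dvd n i h4, F_eq_pat_of_dvd n (i+1) h4, F_eq_pat_of_dvd n (i+2) h4,
      F_eq_pat_of_dvd n (i+3) h4]
    exact pat_window i
  · have hn6 : 6 ≤ n := by omega
    rw [← F_mod n i, F_shift n i 1, F_shift n i 2, F_shift n i 3]
    have hr : i % n < n := Nat.mod_lt _ (by omega)
    set r := i % n with hrdef
    clear_value r
    have hFn : F n n = pat 0 := by
      unfold F; rw [Nat.mod_self]
      simp [show (0:ℕ) ≠ n - 2 by omega, show (0:ℕ) ≠ n - 1 by omega]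
    have hFn1 : F n (n + 1) = pat 1 := by
      unfold F
      rw [show (n+1) % n = 1 by rw [Nat.add_mod_left, Nat.mod_eq_of_lt (by omega)]]
      simp [show (1:ℕ) ≠ n - 2 by omega, show (1:ℕ) ≠ n - 1 by omega]
    have hFn2 : F n (n + 2) = pat 2 := by
      unfold F
      rw [show (n+2) % n = 2 by rw [Nat.add_mod_left, Nat.mod_eq_of_lt (by omega)]]
      simp [show (2:ℕ) ≠ n - 2 by omega, show (2:ℕ) ≠ n - 1 by omega]
    have hc : r ≤ n - 6 ∨ r = n - 5 ∨ r = n - 4 ∨ r = n - 3 ∨ r = n - 2 ∨ r = n - 1 := by omega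
    rcases hc with hc | hc | hc | hc | hc | hc
    · rw [F_eq_pat n r (by omega) (by omega) (by omega),
        F_eq_pat n (r+1) (by omega) (by omega) (by omega),
        F_eq_pat n (r+2) (by omega) (by omega) (by omega),
        F_eq_pat n (r+3) (by omega) (by omega) (by omega)]
      exact pat_window r
    · subst hc
      rw [F_eq_pat n (n-5) (by omega) (by omega) (by omega),
        F_eq_pat n (n-5+1) (by omega) (by omega) (by omega),
        F_eq_pat n (n-5+2) (by omega) (by omega) (by omega),
        F_special1 n (n-5+3) (by omega) (by rw [show n-5+3 = n-2 by omega, Nat.mod_eq_of_lt (by omega)]) hn,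
        pat_mod (n-5), show (n-5) % 4 = 1 by omega,
        pat_mod (n-5+1), show (n-5+1) % 4 = 2 by omega,
        pat_mod (n-5+2), show (n-5+2) % 4 = 3 by omega]
      decide
    · subst hc
      rw [F_eq_pat n (n-4) (by omega) (by omega) (by omega),
        F_eq_pat n (n-4+1) (by omega) (by omega) (by omega),
        F_special1 n (n-4+2) (by omega) (by rw [show n-4+2 = n-2 by omega, Nat.mod_eq_of_lt (by omega)]) hn,
        F_special2 n (n-4+3) (by omega) (by rw [show n-4+3 = n-1 by omega, Nat.mod_eq_of_lt (by omega)]) hn,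
        pat_mod (n-4), show (n-4) % 4 = 2 by omega,
        pat_mod (n-4+1), show (n-4+1) % 4 = 3 by omega]
      decide
    · subst hc
      rw [F_eq_pat n (n-3) (by omega) (by omega) (by omega),
        F_special1 n (n-3+1) (by omega) (by rw [show n-3+1 = n-2 by omega, Nat.mod_eq_of_lt (by omega)]) hn,
        F_special2 n (n-3+2) (by omega) (by rw [show n-3+2 = n-1 by omega, Nat.mod_eq_of_lt (by omega)]) hn,
        show n-3+3 = n by omega, hFn,
        pat_mod (n-3), show (n-3) % 4 = 3 by omega]
      decide
    · subst hc
      rw [F_special1 n (n-2) (by omega) (by rw [Nat.mod_eq_of_lt (by omega)]) hn,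
        F_special2 n (n-2+1) (by omega) (by rw [show n-2+1 = n-1 by omega, Nat.mod_eq_of_lt (by omega)]) hn,
        show n-2+2 = n by omega, hFn,
        show n-2+3 = n+1 by omega, hFn1]
      decide
    · subst hc
      rw [F_special2 n (n-1) (by omega) (by rw [Nat.mod_eq_of_lt (by omega)]) hn,
        show n-1+1 = n by omega, hFn,
        show n-1+2 = n+1 by omega, hFn1,
        show n-1+3 = n+2 by omega, hFn2]
      decide

end StarAux

open StarAux in
theorem even_cycle_star_three (n : ℕ) (hn : 3 ≤ n) (he : Even n) :
    ∃ c : Sym2 (Fin n) → Fin 3, IsStarEdgeColoring (cycleGraph n) c := by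
  haveI : NeZero n := ⟨by omega⟩
  have he2 : n % 2 = 0 := Nat.even_iff.mp he
  -- basic Fin facts
  have val_one : (1 : Fin n).val = 1 := by rw [Fin.val_one', Nat.mod_eq_of_lt (by omega)]
  have val_add_one : ∀ x : Fin n, (x + 1).val = (x.val + 1) % n := by
    intro x; rw [Fin.val_add, val_one]
  have Fv : ∀ (x : Fin n) (k : ℕ), F n ((x + 1).val + k) = F n (x.val + 1 + k) := by
    intro x k
    rw [val_add_one x]
    exact (F_shift n (x.val + 1) k).symm
  have Fchain : ∀ (x : Fin n) (k : ℕ), F n ((x + 1).val + k) = F n (x.val + (k + 1)) := by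
    intro x k; rw [Fv x k]; exact congrArg (F n) (by omega)
  have Fv0 : ∀ x : Fin n, F n ((x + 1).val) = F n (x.val + 1) := by
    intro x; simpa using Fv x 0
  -- adjacency in the cycle graph
  have adj_cases : ∀ {a b : Fin n}, (cycleGraph n).Adj a b → b = a + 1 ∨ a = b + 1 := by
    intro a b hadj
    rw [cycleGraph_adj'] at hadj
    have key : ∀ x y : Fin n, (x - y).val = 1 → x = y + 1 := by
      intro x y hxy
      have h1 : x - y = 1 := Fin.ext (by rw [hxy, val_one])
      exact (sub_eq_iff_eq_add.mp h1).trans (add_comm 1 y)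
    rcases hadj with h | h
    · exact Or.inr (key a b h)
    · exact Or.inl (key b a h)
  -- no 2-cycles
  have two_ne : ∀ a : Fin n, a ≠ a + 1 + 1 := by
    intro a h
    have h1 := congrArg Fin.val h
    rw [val_add_one (a+1), val_add_one a] at h1
    have h2 : a.val < n := a.isLt
    rcases Nat.lt_or_ge (a.val + 1) n with hlt | hge
    · rw [Nat.mod_eq_of_lt hlt] at h1
      rcases Nat.lt_or_ge (a.val + 1 + 1) n with hlt2 | hge2
      · rw [Nat.mod_eq_of_lt hlt2] at h1; omega
      · have : (a.val + 1 + 1) % n = a.val + 1 + 1 - n := by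
          rw [Nat.mod_eq_sub_mod hge2, Nat.mod_eq_of_lt (by omega)]
        rw [this] at h1; omega
    · have hv : a.val = n - 1 := by omega
      have : (a.val + 1) % n = 0 := by rw [hv, show n - 1 + 1 = n by omega, Nat.mod_self]
      rw [this, Nat.mod_eq_of_lt (by omega)] at h1; omega
  -- the coloring
  set g : Fin n → Fin n → Fin 3 := fun a b =>
    if b = a + 1 ∧ a ≠ b + 1 then F n a.val
    else if a = b + 1 ∧ b ≠ a + 1 then F n b.val else 0 with hg
  have gsymm : ∀ a b, g a b = g b a := by
    intro a b
    by_cases h1 : b = a + 1 <;> by_cases h2 : a = b + 1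
    · exact absurd (by rw [h1] at h2; exact h2) (two_ne a)
    · simp [hg, h1, h2]
    · simp [hg, h1, h2]
    · simp [hg, h1, h2]
  set c : Sym2 (Fin n) → Fin 3 := Sym2.lift ⟨g, gsymm⟩ with hcdef
  have c_eval : ∀ x : Fin n, c s(x, x + 1) = F n x.val := by
    intro x
    have h2 : x ≠ (x + 1) + 1 := two_ne x
    simp [hcdef, hg, h2]
  have c_eval' : ∀ x : Fin n, c s(x + 1, x) = F n x.val := by
    intro x; rw [Sym2.eq_swap]; exact c_eval x
  have edge_form : ∀ e ∈ (cycleGraph n).edgeSet, ∃ x : Fin n, e = s(x, x + 1) := by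
    intro e he'
    induction e using Sym2.ind with
    | _ a b =>
      rw [mem_edgeSet] at he'
      rcases adj_cases he' with h | h
      · exact ⟨a, by rw [h]⟩
      · exact ⟨b, by rw [h, Sym2.eq_swap]⟩
  refine ⟨c, ?_, ?_⟩
  · -- properness
    intro e₁ he₁ e₂ he₂ hne hshare
    obtain ⟨w, hv1, hv2⟩ := hshare
    obtain ⟨x, rfl⟩ := edge_form e₁ he₁
    obtain ⟨y, rfl⟩ := edge_form e₂ he₂
    rw [Sym2.mem_iff] at hv1 hv2
    rw [c_eval x, c_eval y]
    rcases hv1 with rfl | rfl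
    · rcases hv2 with rfl | h
      · exact absurd rfl hne
      · -- x = y + 1
        rw [h, Fv0 y]
        exact (F_adj n y.val hn he2).symm
    · rcases hv2 with h | h
      · -- y = x + 1
        rw [← h, Fv0 x]
        exact F_adj n x.val hn he2
      · have : x = y := add_right_cancel h
        subst this
        exact absurd rfl hne
  · -- star condition on walks of length 4
    intro u v p hlen hnodup
    have step : ∀ {a b d : Fin n}, b = a + 1 → (d = b + 1 ∨ b = d + 1) →
        s(a, b) ≠ s(b, d) → d = b + 1 := by
      intro a b d hb hd hne
      rcases hd with h | h
      · exact h
      · exfalso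
        apply hne
        have had : d = a := by rw [hb] at h; exact add_right_cancel h.symm
        rw [had, Sym2.eq_swap]
    have step' : ∀ {a b d : Fin n}, a = b + 1 → (d = b + 1 ∨ b = d + 1) →
        s(a, b) ≠ s(b, d) → b = d + 1 := by
      intro a b d hb hd hne
      rcases hd with h | h
      · exfalso
        apply hne
        rw [h, ← hb, Sym2.eq_swap]
      · exact h
    cases p with
    | nil => simp at hlen
    | cons h1 p =>
      rename_i a1
      cases p with
      | nil => simp at hlen
      | cons h2 p =>
        rename_i a2
        cases p with
        | nil => simp at hlen
        | cons h3 p =>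
          rename_i a3
          cases p with
          | nil => simp at hlen
          | cons h4 p =>
            cases p with
            | cons h5 p => simp [SimpleGraph.Walk.length_cons] at hlen
            | nil =>
              simp only [SimpleGraph.Walk.edges_cons, SimpleGraph.Walk.edges_nil,
                List.nodup_cons, List.nodup_nil, and_true] at hnodup
              obtain ⟨m0, m1, m2, -⟩ := hnodup
              simp only [SimpleGraph.Walk.edges_cons, SimpleGraph.Walk.edges_nil,
                List.map_cons, List.map_nil, List.toFinset_cons, List.toFinset_nil,
                insert_empty_eq]
              have h01 : s(u, a1) ≠ s(a1, a2) := fun h => m0 (by rw [h]; exact List.mem_cons_self)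
              have h12 : s(a1, a2) ≠ s(a2, a3) := fun h => m1 (by rw [h]; exact List.mem_cons_self)
              have h23 : s(a2, a3) ≠ s(a3, v) := fun h => m2 (by rw [h]; exact List.mem_cons_self)
              rcases adj_cases h1 with d1 | d1
              · -- forward
                have d2 : a2 = a1 + 1 := step d1 (adj_cases h2) h01
                have d3 : a3 = a2 + 1 := step d2 (adj_cases h3) h12
                have d4 : v = a3 + 1 := step d3 (adj_cases h4) h23
                subst d1; subst d2; subst d3; subst d4
                rw [c_eval u, c_eval (u+1), c_eval (u+1+1), c_eval (u+1+1+1)]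
                have e1 : F n ((u+1) : Fin n).val = F n (u.val + 1) := Fv0 u
                have e2 : F n ((u+1+1) : Fin n).val = F n (u.val + 2) := by
                  have h := Fchain (u+1) 0
                  simp only [Nat.add_zero] at h
                  rw [h, Fchain u 1]
                have e3 : F n ((u+1+1+1) : Fin n).val = F n (u.val + 3) := by
                  have h := Fchain (u+1+1) 0
                  simp only [Nat.add_zero] at h
                  rw [h, Fchain (u+1) 1, Fchain u 2]
                rw [e1, e2, e3]
                exact F_window n u.val hn he2
              · -- backward
                have d2 : a1 = a2 + 1 := step' d1 (adj_cases h2) h01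
                have d3 : a2 = a3 + 1 := step' d2 (adj_cases h3) h12
                have d4 : a3 = v + 1 := step' d3 (adj_cases h4) h23
                subst d1; subst d2; subst d3; subst d4
                rw [c_eval' (v+1+1+1), c_eval' (v+1+1), c_eval' (v+1), c_eval' v]
                have e1 : F n ((v+1) : Fin n).val = F n (v.val + 1) := Fv0 v
                have e2 : F n ((v+1+1) : Fin n).val = F n (v.val + 2) := by
                  have h := Fchain (v+1) 0
                  simp only [Nat.add_zero] at h
                  rw [h, Fchain v 1]
                have e3 : F n ((v+1+1+1) : Fin n).val = F n (v.val + 3) := by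
                  have h := Fchain (v+1+1) 0
                  simp only [Nat.add_zero] at h
                  rw [h, Fchain (v+1) 1, Fchain v 2]
                rw [e1, e2, e3]
                have hset : ({F n (v.val+3), F n (v.val+2), F n (v.val+1), F n v.val} : Finset (Fin 3))
                    = {F n v.val, F n (v.val+1), F n (v.val+2), F n (v.val+3)} := by
                  ext z; simp; tauto
                rw [hset]
                exact F_window n v.val hn he2
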